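/- Let u : ℤ → ℝ → ℝ be differentiable in t and satisfy at every site the equation u' = (u₂−u₋₂) / ( (1+(u₂+u)(u₁+u₋₁)) (1+(u₁+u₋₁)(u+u₋₂)) ), with all denominators nonzero. Define w(n,t) := 1/(1+(u₃+u₁)(u₂+u)) − 1 (indices relative to site n). Then w satisfies w' = (w+1)( w₂(1/w₁+1)w − w(1/w₋₁+1)w₋₂ + w₁ − w₋₁ ). -/

import Mathlib

set_option maxHeartbeats 2000000 in
lemma key6' (p q r s T v : ℝ) (hp : p ≠ 0) (hq : q ≠ 0) (hs : s ≠ 0) (hr : r ≠ 0)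
    (he1 : 1 + p * q ≠ 0) (he0 : 1 + q * r ≠ 0) (he2 : 1 + s * p ≠ 0)
    (he3 : 1 + T * s ≠ 0) (hem : 1 + r * v ≠ 0) :
    (1 / (1 + p * q) - 1 + 1) *
      ((1 / (1 + T * s) - 1) * (1 / (1 / (1 + s * p) - 1) + 1) * (1 / (1 + p * q) - 1)
        - (1 / (1 + p * q) - 1) * (1 / (1 / (1 + q * r) - 1) + 1) * (1 / (1 + r * v) - 1)
        + (1 / (1 + s * p) - 1) - (1 / (1 + q * r) - 1))
    = -(((T - p) / ((1 + T * s) * (1 + s * p)) + (p - r) / ((1 + p * q) * (1 + q * r))) * q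
        + p * ((s - q) / ((1 + s * p) * (1 + p * q)) + (q - v) / ((1 + q * r) * (1 + r * v))))
      / (1 + p * q) ^ 2 := by
  have hsp : s * p ≠ 0 := mul_ne_zero hs hp
  have hqr : q * r ≠ 0 := mul_ne_zero hq hr
  have h2 : 1 / (1 / (1 + s * p) - 1) + 1 = -(1 / (s * p)) := by
    have e : 1 / (1 + s * p) - 1 = -(s * p) / (1 + s * p) := by field_simp; ring
    rw [e, one_div_div]
    field_simp
    ring
  have h0 : 1 / (1 / (1 + q * r) - 1) + 1 = -(1 / (q * r)) := by
    have e : 1 / (1 + q * r) - 1 = -(q * r) / (1 + q * r) := by field_simp; ring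
    rw [e, one_div_div]
    field_simp
    ring
  rw [h2, h0]
  have he2' : 1 + p * s ≠ 0 := by rwa [mul_comm]
  field_simp
  ring

lemma key8' (a b c d e f g h : ℝ)
    (he1 : 1 + (f + d) * (e + c) ≠ 0) (he0 : 1 + (e + c) * (d + b) ≠ 0)
    (he2 : 1 + (g + e) * (f + d) ≠ 0) (he3 : 1 + (h + f) * (g + e) ≠ 0)
    (hem : 1 + (d + b) * (c + a) ≠ 0)
    (hA : (g + e) * (f + d) ≠ 0) (hB : (e + c) * (d + b) ≠ 0) :
    (1 / (1 + (f + d) * (e + c)) - 1 + 1) *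
      ((1 / (1 + (h + f) * (g + e)) - 1) * (1 / (1 / (1 + (g + e) * (f + d)) - 1) + 1) *
          (1 / (1 + (f + d) * (e + c)) - 1)
        - (1 / (1 + (f + d) * (e + c)) - 1) * (1 / (1 / (1 + (e + c) * (d + b)) - 1) + 1) *
          (1 / (1 + (d + b) * (c + a)) - 1)
        + (1 / (1 + (g + e) * (f + d)) - 1) - (1 / (1 + (e + c) * (d + b)) - 1))
    = -(((h - d) / ((1 + (h + f) * (g + e)) * (1 + (g + e) * (f + d)))
          + (f - b) / ((1 + (f + d) * (e + c)) * (1 + (e + c) * (d + b)))) * (e + c)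
        + (f + d) * ((g - c) / ((1 + (g + e) * (f + d)) * (1 + (f + d) * (e + c)))
          + (e - a) / ((1 + (e + c) * (d + b)) * (1 + (d + b) * (c + a)))))
      / (1 + (f + d) * (e + c)) ^ 2 := by
  have hp : f + d ≠ 0 := right_ne_zero_of_mul hA
  have hs : g + e ≠ 0 := left_ne_zero_of_mul hA
  have hq : e + c ≠ 0 := left_ne_zero_of_mul hB
  have hr : d + b ≠ 0 := right_ne_zero_of_mul hB
  have := key6' (f + d) (e + c) (d + b) (g + e) (h + f) (c + a) hp hq hs hr he1 he0 he2 he3 hem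
  rw [show h - d = (h + f) - (f + d) by ring, show f - b = (f + d) - (d + b) by ring,
    show g - c = (g + e) - (e + c) by ring, show e - a = (e + c) - (c + a) by ring]
  exact this

set_option maxHeartbeats 1000000 in
/-- Substitution w = 1/(1+(u₃+u₁)(u₂+u)) − 1 maps solutions of lattice equation (e)
to solutions of the universal equation (wt). -/
theorem stmt12 (u : ℤ → ℝ → ℝ)
    (hden : ∀ (n : ℤ) (t : ℝ),
      1 + (u (n + 2) t + u n t) * (u (n + 1) t + u (n - 1) t) ≠ 0)
    (hu : ∀ (n : ℤ) (t : ℝ), HasDerivAt (u n)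
      ((u (n + 2) t - u (n - 2) t)
        / ((1 + (u (n + 2) t + u n t) * (u (n + 1) t + u (n - 1) t))
          * (1 + (u (n + 1) t + u (n - 1) t) * (u n t + u (n - 2) t)))) t)
    (w : ℤ → ℝ → ℝ)
    (hw : ∀ (n : ℤ) (t : ℝ), w n t =
      1 / (1 + (u (n + 3) t + u (n + 1) t) * (u (n + 2) t + u n t)) - 1)
    (n : ℤ) (t : ℝ) (h1 : w (n + 1) t ≠ 0) (hm1 : w (n - 1) t ≠ 0) :
    HasDerivAt (w n)
      ((w n t + 1) * (w (n + 2) t * (1 / w (n + 1) t + 1) * w n t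
        - w n t * (1 / w (n - 1) t + 1) * w (n - 2) t
        + w (n + 1) t - w (n - 1) t)) t := by
  have e1 : n + 1 + 2 = n + 3 := by ring
  have e2 : n + 1 + 1 = n + 2 := by ring
  have e3 : n + 1 - 1 = n := by ring
  have e4 : n + 1 - 2 = n - 1 := by ring
  have e5 : n + 2 + 2 = n + 4 := by ring
  have e6 : n + 2 - 2 = n := by ring
  have e7 : n + 2 + 1 = n + 3 := by ring
  have e8 : n + 2 - 1 = n + 1 := by ring
  have e9 : n + 3 + 2 = n + 5 := by ring
  have e10 : n + 3 - 2 = n + 1 := by ring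
  have e11 : n + 3 + 1 = n + 4 := by ring
  have e12 : n + 3 - 1 = n + 2 := by ring
  have e13 : n + 1 + 3 = n + 4 := by ring
  have e14 : n + 2 + 3 = n + 5 := by ring
  have e15 : n - 1 + 3 = n + 2 := by ring
  have e16 : n - 1 + 2 = n + 1 := by ring
  have e17 : n - 1 + 1 = n := by ring
  have e18 : n - 2 + 3 = n + 1 := by ring
  have e19 : n - 2 + 2 = n := by ring
  have e20 : n - 2 + 1 = n - 1 := by ring
  have e21 : n - 1 - 1 = n - 2 := by ring
  have hE1 : (1 + (u (n + 3) t + u (n + 1) t) * (u (n + 2) t + u n t)) ≠ 0 := by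
    have := hden (n + 1) t; rwa [e1, e2, e3] at this
  have hE2 : (1 + (u (n + 4) t + u (n + 2) t) * (u (n + 3) t + u (n + 1) t)) ≠ 0 := by
    have := hden (n + 2) t; rwa [e5, e7, e8] at this
  have hE3 : (1 + (u (n + 5) t + u (n + 3) t) * (u (n + 4) t + u (n + 2) t)) ≠ 0 := by
    have := hden (n + 3) t; rwa [e9, e11, e12] at this
  have hE0 : (1 + (u (n + 2) t + u n t) * (u (n + 1) t + u (n - 1) t)) ≠ 0 := hden n t
  have hEm1 : (1 + (u (n + 1) t + u (n - 1) t) * (u n t + u (n - 2) t)) ≠ 0 := by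
    have := hden (n - 1) t; rwa [e16, e17, e21] at this
  have h0 := hu n t
  have hp1 := hu (n + 1) t; rw [e1, e2, e3, e4] at hp1
  have hp2 := hu (n + 2) t; rw [e5, e6, e7, e8] at hp2
  have hp3 := hu (n + 3) t; rw [e9, e10, e11, e12] at hp3
  have hwn : w n = fun s => 1 / (1 + (u (n + 3) s + u (n + 1) s) * (u (n + 2) s + u n s)) - 1 := by
    funext s; rw [hw n s]
  have key : HasDerivAt
      (fun s => 1 / (1 + (u (n + 3) s + u (n + 1) s) * (u (n + 2) s + u n s)) - 1)
      (-(((u (n + 5) t - u (n + 1) t)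
              / ((1 + (u (n + 5) t + u (n + 3) t) * (u (n + 4) t + u (n + 2) t))
                * (1 + (u (n + 4) t + u (n + 2) t) * (u (n + 3) t + u (n + 1) t)))
            + (u (n + 3) t - u (n - 1) t)
              / ((1 + (u (n + 3) t + u (n + 1) t) * (u (n + 2) t + u n t))
                * (1 + (u (n + 2) t + u n t) * (u (n + 1) t + u (n - 1) t))))
            * (u (n + 2) t + u n t)
          + (u (n + 3) t + u (n + 1) t)
            * ((u (n + 4) t - u n t)
                / ((1 + (u (n + 4) t + u (n + 2) t) * (u (n + 3) t + u (n + 1) t))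
                  * (1 + (u (n + 3) t + u (n + 1) t) * (u (n + 2) t + u n t)))
              + (u (n + 2) t - u (n - 2) t)
                / ((1 + (u (n + 2) t + u n t) * (u (n + 1) t + u (n - 1) t))
                  * (1 + (u (n + 1) t + u (n - 1) t) * (u n t + u (n - 2) t)))))
        / (1 + (u (n + 3) t + u (n + 1) t) * (u (n + 2) t + u n t)) ^ 2) t := by
    simpa only [one_div, Pi.add_apply, Pi.mul_apply, Pi.inv_apply] using
      ((((hp3.add hp1).mul (hp2.add h0)).const_add 1).inv hE1).sub_const 1
  rw [hwn]
  convert key using 1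
  beta_reduce
  rw [hw (n + 1) t, hw (n + 2) t, hw (n - 1) t, hw (n - 2) t,
    e13, e1, e2, e14, e5, e7, e15, e16, e17, e18, e19, e20]
  have hw1 : 1 / (1 + (u (n + 4) t + u (n + 2) t) * (u (n + 3) t + u (n + 1) t)) - 1 ≠ 0 := by
    have := h1; rwa [hw (n + 1) t, e13, e1, e2] at this
  have hwm1 : 1 / (1 + (u (n + 2) t + u n t) * (u (n + 1) t + u (n - 1) t)) - 1 ≠ 0 := by
    have := hm1; rwa [hw (n - 1) t, e15, e16, e17] at this
  have hA : (u (n + 4) t + u (n + 2) t) * (u (n + 3) t + u (n + 1) t) ≠ 0 := by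
    intro h; apply hw1; rw [h]; norm_num
  have hB : (u (n + 2) t + u n t) * (u (n + 1) t + u (n - 1) t) ≠ 0 := by
    intro h; apply hwm1; rw [h]; norm_num
  exact key8' (u (n - 2) t) (u (n - 1) t) (u n t) (u (n + 1) t) (u (n + 2) t)
    (u (n + 3) t) (u (n + 4) t) (u (n + 5) t) hE1 hE0 hE2 hE3 hEm1 hA hB
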